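/- arXiv:1412.7906 — 4 statements merged into one kernel-verified Lean document; each statement's English description precedes it below -/
import Mathlib

section
/- The power series F(z) = Σ c_n z^n defined by the functional equation F(z) = (1+z+z^2)F(z^4) - z^4 F(z^16) with F(0)=1 has all coefficients c_n in {0,1}. -/
/-- The power series `F(z) = Σ c_n z^n` defined by
`F(z) = (1+z+z^2)·F(z^4) - z^4·F(z^16)` with `F(0) = 1` has all coefficients in `{0,1}`.
The functional equation is encoded coefficientwise: the `n`-th coefficient of
`(1+z+z^2)·F(z^4)` is `Σ_{i=0}^{2} [4 ∣ n-i ∧ i ≤ n] · c((n-i)/4)`, and that of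
`z^4·F(z^16)` is `[16 ∣ n-4 ∧ 4 ≤ n] · c((n-4)/16)`. -/
theorem stmt_0 (c : ℕ → ℤ) (h0 : c 0 = 1)
    (heq : ∀ n : ℕ,
      c n = (∑ i ∈ Finset.range 3, if 4 ∣ (n - i) ∧ i ≤ n then c ((n - i) / 4) else 0)
            - (if 16 ∣ (n - 4) ∧ 4 ≤ n then c ((n - 4) / 16) else 0)) :
    ∀ n : ℕ, c n = 0 ∨ c n = 1 := by
  intro n
  induction n using Nat.strong_induction_on with
  | _ n ih =>
    by_cases hn : n = 0
    · right; rw [hn, h0]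
    rcases (show n % 4 = 1 ∨ n % 4 = 2 ∨ n % 4 = 3 ∨ (n % 4 = 0 ∧ n % 16 = 4)
        ∨ (n % 4 = 0 ∧ n % 16 ≠ 4) by omega) with h | h | h | ⟨h, h16⟩ | ⟨h, h16⟩
    · obtain ⟨q, rfl⟩ : ∃ q, n = 4 * q + 1 := ⟨n / 4, by omega⟩
      have h := heq (4 * q + 1)
      simp only [Finset.sum_range_succ, Finset.sum_range_zero, zero_add] at h
      split_ifs at h with h1 h2 h3 h4 <;> try (exfalso; omega)
      have e : (4 * q + 1 - 1) / 4 = q := by omega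
      rw [e] at h
      rw [show c (4 * q + 1) = c q by omega]
      exact ih q (by omega)
    · obtain ⟨q, rfl⟩ : ∃ q, n = 4 * q + 2 := ⟨n / 4, by omega⟩
      have h := heq (4 * q + 2)
      simp only [Finset.sum_range_succ, Finset.sum_range_zero, zero_add] at h
      split_ifs at h with h1 h2 h3 h4 <;> try (exfalso; omega)
      have e : (4 * q + 2 - 2) / 4 = q := by omega
      rw [e] at h
      rw [show c (4 * q + 2) = c q by omega]
      exact ih q (by omega)
    · obtain ⟨q, rfl⟩ : ∃ q, n = 4 * q + 3 := ⟨n / 4, by omega⟩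
      have h := heq (4 * q + 3)
      simp only [Finset.sum_range_succ, Finset.sum_range_zero, zero_add] at h
      split_ifs at h with h1 h2 h3 h4 <;> try (exfalso; omega)
      left; omega
    · obtain ⟨k, rfl⟩ : ∃ k, n = 16 * k + 4 := ⟨n / 16, by omega⟩
      have h := heq (16 * k + 4)
      simp only [Finset.sum_range_succ, Finset.sum_range_zero, zero_add] at h
      split_ifs at h with h1 h2 h3 h4 <;> try (exfalso; omega)
      have e1 : (16 * k + 4 - 0) / 4 = 4 * k + 1 := by omega
      have e2 : (16 * k + 4 - 4) / 16 = k := by omega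
      rw [e1, e2] at h
      have h2 := heq (4 * k + 1)
      simp only [Finset.sum_range_succ, Finset.sum_range_zero, zero_add] at h2
      split_ifs at h2 with g1 g2 g3 g4 <;> try (exfalso; omega)
      have e3 : (4 * k + 1 - 1) / 4 = k := by omega
      rw [e3] at h2
      left; omega
    · obtain ⟨q, rfl⟩ : ∃ q, n = 4 * q := ⟨n / 4, by omega⟩
      have hq : ¬ (16 ∣ 4 * q - 4 ∧ 4 ≤ 4 * q) := by omega
      have h := heq (4 * q)
      simp only [Finset.sum_range_succ, Finset.sum_range_zero, zero_add] at h
      split_ifs at h with h1 h2 h3 h4 <;> try (exfalso; omega)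
      have e : (4 * q - 0) / 4 = q := by omega
      rw [e] at h
      rw [show c (4 * q) = c q by omega]
      exact ih q (by omega)
end

section
/- The limit of μ(z) = F(z)/F(z^4) as z → 1⁻ exists and equals (3+√5)/2 = ρ², where ρ = (1+√5)/2 is the golden ratio. -/
set_option maxHeartbeats 1000000


/-- The limit of `μ(z) = F(z)/F(z⁴)` as `z → 1⁻` exists and equals
`(3+√5)/2 = ρ²`, where `ρ = (1+√5)/2` is the golden ratio. -/
theorem stmt_5 (c : ℕ → ℝ) (F : ℝ → ℝ)
    (hc : ∀ n, c n = 0 ∨ c n = 1) (h0 : c 0 = 1)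
    (hF : ∀ z : ℝ, |z| < 1 → HasSum (fun n => c n * z ^ n) (F z))
    (heq : ∀ z : ℝ, 0 ≤ z → z < 1 →
      F z = (1 + z + z ^ 2) * F (z ^ 4) - z ^ 4 * F (z ^ 16)) :
    (3 + Real.sqrt 5) / 2 = ((1 + Real.sqrt 5) / 2) ^ 2 ∧
    Filter.Tendsto (fun z : ℝ => F z / F (z ^ 4))
      (nhdsWithin 1 (Set.Iio 1)) (nhds ((3 + Real.sqrt 5) / 2)) := by
  have s5 : Real.sqrt 5 ^ 2 = 5 := Real.sq_sqrt (by norm_num)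
  have s5nn : 0 ≤ Real.sqrt 5 := Real.sqrt_nonneg 5
  have s5lb : 2 < Real.sqrt 5 := by nlinarith
  have s5ub : Real.sqrt 5 < 3 := by nlinarith
  set φ : ℝ := (3 + Real.sqrt 5) / 2 with hφdef
  set k : ℝ := (3 - Real.sqrt 5) / 2 with hkdef
  have hk0 : 0 < k := by rw [hkdef]; linarith
  have hkhalf : k ≤ 1 / 2 := by rw [hkdef]; linarith
  have hkφ : k * φ = 1 := by rw [hkdef, hφdef]; nlinarith
  have hφ3 : φ = 3 - k := by rw [hkdef, hφdef]; ring
  have hφlb : 5 / 2 < φ := by rw [hφdef]; linarith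
  have hφub : φ < 3 := by rw [hφdef]; linarith
  have hc0 : ∀ n, 0 ≤ c n := fun n => by rcases hc n with h | h <;> norm_num [h]
  have F1 : ∀ x : ℝ, 0 ≤ x → x < 1 → 1 ≤ F x := by
    intro x hx hx1
    have h := hF x (by rwa [abs_of_nonneg hx])
    have h2 := le_hasSum h 0 (fun i _ => mul_nonneg (hc0 i) (pow_nonneg hx i))
    simpa [h0] using h2
  have Fmono : ∀ x y : ℝ, 0 ≤ x → x ≤ y → y < 1 → F x ≤ F y := by
    intro x y hx hxy hy
    have hy0 : 0 ≤ y := le_trans hx hxy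
    exact hasSum_le
      (fun n => mul_le_mul_of_nonneg_left (pow_le_pow_left₀ hx hxy n) (hc0 n))
      (hF x (by rw [abs_of_nonneg hx]; linarith)) (hF y (by rwa [abs_of_nonneg hy0]))
  -- the contraction estimate
  have key : ∀ z : ℝ, 0 ≤ z → z < 1 →
      |F z / F (z ^ 4) - φ| ≤ 7 * (1 - z) + k * |F (z ^ 4) / F (z ^ 16) - φ| := by
    intro z hz hz1
    have hcube : z ^ 3 ≤ 1 := pow_le_one₀ hz hz1.le
    have h12 : z ^ 12 ≤ 1 := pow_le_one₀ hz hz1.le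
    have hz4le : z ^ 4 ≤ z := by nlinarith [mul_le_mul_of_nonneg_left hcube hz]
    have hz40 : (0:ℝ) ≤ z ^ 4 := by positivity
    have hz41 : z ^ 4 < 1 := lt_of_le_of_lt hz4le hz1
    have hz16le : z ^ 16 ≤ z ^ 4 := by
      nlinarith [mul_le_mul_of_nonneg_left h12 hz40]
    have hz160 : (0:ℝ) ≤ z ^ 16 := by positivity
    have hB : 1 ≤ F (z ^ 4) := F1 _ hz40 hz41
    have hC : 1 ≤ F (z ^ 16) := F1 _ hz160 (lt_of_le_of_lt hz16le hz41)
    have hCB : F (z ^ 16) ≤ F (z ^ 4) := Fmono _ _ hz160 hz16le hz41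
    have hB0 : (0:ℝ) < F (z ^ 4) := by linarith
    have hC0 : (0:ℝ) < F (z ^ 16) := by linarith
    set B := F (z ^ 4)
    set C := F (z ^ 16)
    have hD : F z = (1 + z + z ^ 2) * B - z ^ 4 * C := heq z hz hz1
    set E := |B / C - φ| with hEdef
    have hE : |B - φ * C| = E * C := by
      rw [hEdef, show B - φ * C = (B / C - φ) * C by field_simp, abs_mul,
        abs_of_pos hC0]
    have hid : F z / B - φ = (z - 1) + (z ^ 2 - 1)
        + (k * (B - φ * C) + (1 - z ^ 4) * C) / B := by
      rw [hD]
      field_simp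
      linear_combination C * hkφ - B * hφ3
    have hQ : |(k * (B - φ * C) + (1 - z ^ 4) * C) / B| ≤ k * E + (1 - z ^ 4) := by
      rw [abs_div, abs_of_pos hB0, div_le_iff₀ hB0]
      have h1 : |k * (B - φ * C) + (1 - z ^ 4) * C|
          ≤ k * (E * C) + (1 - z ^ 4) * C := by
        calc |k * (B - φ * C) + (1 - z ^ 4) * C|
            ≤ |k * (B - φ * C)| + |(1 - z ^ 4) * C| := abs_add_le _ _
          _ = k * (E * C) + (1 - z ^ 4) * C := by
              rw [abs_mul, abs_mul, abs_of_pos hk0, hE, abs_of_pos hC0,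
                abs_of_nonneg (by nlinarith [pow_le_one₀ hz hz1.le (n := 4)] : (0:ℝ) ≤ 1 - z ^ 4)]
      have hEnn : 0 ≤ E := abs_nonneg _
      have hz4one : z ^ 4 ≤ 1 := pow_le_one₀ hz hz1.le
      nlinarith [mul_le_mul_of_nonneg_left hCB (mul_nonneg hk0.le hEnn),
        mul_le_mul_of_nonneg_left hCB (by linarith : (0:ℝ) ≤ 1 - z ^ 4)]
    have hz4one : z ^ 4 ≤ 1 := pow_le_one₀ hz hz1.le
    calc |F z / B - φ|
        = |(z - 1) + (z ^ 2 - 1) + (k * (B - φ * C) + (1 - z ^ 4) * C) / B| := by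
          rw [hid]
      _ ≤ |(z - 1) + (z ^ 2 - 1)| + |(k * (B - φ * C) + (1 - z ^ 4) * C) / B| :=
          abs_add_le _ _
      _ ≤ ((1 - z) + (1 - z ^ 2)) + (k * E + (1 - z ^ 4)) := by
          refine add_le_add ?_ hQ
          rw [abs_of_nonpos (by nlinarith [pow_le_one₀ hz hz1.le (n := 2)])]
          nlinarith [pow_le_one₀ hz hz1.le (n := 2)]
      _ ≤ 7 * (1 - z) + k * E := by nlinarith [sq_nonneg (1 - z), sq_nonneg (1 + z)]
  -- iterated estimate
  have main : ∀ n : ℕ, ∀ z : ℝ, 0 ≤ z → z < 1 →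
      |F z / F (z ^ 4) - φ| ≤ 7 * 4 ^ n * (1 - z) + 2 * k ^ n := by
    intro n
    induction n with
    | zero =>
      intro z hz hz1
      have hcube : z ^ 3 ≤ 1 := pow_le_one₀ hz hz1.le
      have hz4le : z ^ 4 ≤ z := by nlinarith [mul_le_mul_of_nonneg_left hcube hz]
      have hz40 : (0:ℝ) ≤ z ^ 4 := by positivity
      have hz41 : z ^ 4 < 1 := lt_of_le_of_lt hz4le hz1
      have hz160 : (0:ℝ) ≤ z ^ 16 := by positivity
      have hz16lt : z ^ 16 < 1 := by
        have h12 : z ^ 12 ≤ 1 := pow_le_one₀ hz hz1.le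
        nlinarith [mul_le_mul_of_nonneg_left h12 hz40]
      have hB : 1 ≤ F (z ^ 4) := F1 _ hz40 hz41
      have hC : 1 ≤ F (z ^ 16) := F1 _ hz160 hz16lt
      have hB0 : (0:ℝ) < F (z ^ 4) := by linarith
      have hμ1 : 1 ≤ F z / F (z ^ 4) :=
        (one_le_div hB0).mpr (Fmono _ _ hz40 hz4le hz1)
      have hμ3 : F z / F (z ^ 4) ≤ 3 := by
        rw [div_le_iff₀ hB0]
        have hD := heq z hz hz1
        nlinarith [mul_nonneg (by positivity : (0:ℝ) ≤ z ^ 4) (by linarith : (0:ℝ) ≤ F (z ^ 16)),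
          mul_le_mul_of_nonneg_left hB (by nlinarith : (0:ℝ) ≤ 2 - z - z ^ 2)]
      have habs : |F z / F (z ^ 4) - φ| ≤ 2 := by
        rw [abs_le]; constructor <;> linarith
      simp only [pow_zero]
      linarith
    | succ n ih =>
      intro z hz hz1
      have hcube : z ^ 3 ≤ 1 := pow_le_one₀ hz hz1.le
      have hz4le : z ^ 4 ≤ z := by nlinarith [mul_le_mul_of_nonneg_left hcube hz]
      have hz40 : (0:ℝ) ≤ z ^ 4 := by positivity
      have hz41 : z ^ 4 < 1 := lt_of_le_of_lt hz4le hz1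
      have h1 := key z hz hz1
      have h2 := ih (z ^ 4) hz40 hz41
      rw [show ((z ^ 4) ^ 4 : ℝ) = z ^ 16 by ring] at h2
      have h4n : (1:ℝ) ≤ 4 ^ n := one_le_pow₀ (by norm_num)
      have hkn : (0:ℝ) ≤ k ^ n := by positivity
      have hz4b : 1 - z ^ 4 ≤ 4 * (1 - z) := by nlinarith [pow_le_one₀ hz hz1.le (n := 4), pow_le_one₀ hz hz1.le (n := 2), sq_nonneg z]
      have h3 : k * |F (z ^ 4) / F (z ^ 16) - φ|
          ≤ k * (7 * 4 ^ n * (1 - z ^ 4) + 2 * k ^ n) :=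
        mul_le_mul_of_nonneg_left h2 hk0.le
      have h4np : (0:ℝ) < 4 ^ n := by positivity
      nlinarith [pow_succ (4:ℝ) n, pow_succ k n,
        mul_le_mul_of_nonneg_left hz4b (by positivity : (0:ℝ) ≤ k * (7 * 4 ^ n)),
        mul_le_mul_of_nonneg_right hkhalf (mul_nonneg (mul_nonneg (by positivity : (0:ℝ) ≤ (4:ℝ) ^ n) (by linarith : (0:ℝ) ≤ 1 - z)) (by norm_num) : (0:ℝ) ≤ 4 ^ n * (1 - z) * 28),
        mul_nonneg (mul_nonneg (by norm_num : (0:ℝ) ≤ 7) h4np.le) (by linarith : (0:ℝ) ≤ 1 - z)]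
  refine ⟨by rw [hφdef]; linear_combination (-(1:ℝ)/4) * s5, ?_⟩
  rw [Metric.tendsto_nhdsWithin_nhds]
  intro ε hε
  obtain ⟨n, hn⟩ := exists_pow_lt_of_lt_one (show (0:ℝ) < ε / 4 by linarith)
    (show k < 1 by linarith)
  have h4np : (0:ℝ) < 4 ^ n := by positivity
  refine ⟨min 1 (ε / (28 * 4 ^ n)), by positivity, ?_⟩
  intro x hx hxd
  rw [Real.dist_eq] at hxd ⊢
  have hx1 : x < 1 := hx
  have hd1 : |x - 1| < 1 := lt_of_lt_of_le hxd (min_le_left _ _)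
  have hx0 : 0 ≤ x := by
    have := abs_lt.mp hd1; linarith [this.1]
  have hb := main n x hx0 hx1
  have h1x : 1 - x < ε / (28 * 4 ^ n) := by
    have h := lt_of_lt_of_le hxd (min_le_right _ _)
    rw [abs_of_nonpos (by linarith)] at h
    linarith
  have hfin : 7 * 4 ^ n * (1 - x) + 2 * k ^ n < ε := by
    have e1 : 7 * 4 ^ n * (1 - x) < 7 * 4 ^ n * (ε / (28 * 4 ^ n)) :=
      mul_lt_mul_of_pos_left h1x (by positivity)
    have e2 : 7 * 4 ^ n * (ε / (28 * 4 ^ n)) = ε / 4 := by field_simp; ring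
    nlinarith
  calc |F x / F (x ^ 4) - φ| ≤ 7 * 4 ^ n * (1 - x) + 2 * k ^ n := hb
    _ < ε := hfin
end

section
/- The function μ(z) = F(z)/F(z⁴) is strictly monotone increasing for z ∈ [0,1). -/
private lemma telescope9 (D A B : ℕ → ℝ) (q : ℝ) (hq0 : 0 ≤ q) (hq1 : q < 1)
    (hrec : ∀ j, D j = A j + B j * D (j+1))
    (hA : ∀ j, 0 ≤ A j) (hB0 : ∀ j, 0 ≤ B j) (hBq : ∀ j, B j ≤ q)
    (hD : ∀ j, -2 ≤ D j) : A 0 ≤ D 0 := by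
  have main : ∀ k j, A j - 2 * q ^ k ≤ D j := by
    intro k
    induction k with
    | zero =>
      intro j
      have := hrec j
      have h1 : B j * (-2) ≤ B j * D (j+1) :=
        mul_le_mul_of_nonneg_left (hD (j+1)) (hB0 j)
      have h2 : B j ≤ 1 := (hBq j).trans hq1.le
      nlinarith [hB0 j]
    | succ k ih =>
      intro j
      have := hrec j
      have h1 : B j * (A (j+1) - 2 * q ^ k) ≤ B j * D (j+1) :=
        mul_le_mul_of_nonneg_left (ih (j+1)) (hB0 j)
      have h2 : B j * (2 * q ^ k) ≤ q * (2 * q ^ k) :=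
        mul_le_mul_of_nonneg_right (hBq j) (by positivity)
      have h3 : 0 ≤ B j * A (j+1) := mul_nonneg (hB0 j) (hA (j+1))
      have h4 : A j + B j * A (j+1) - B j * (2 * q ^ k) ≤ D j := by nlinarith
      calc A j - 2 * q ^ (k+1) = A j - q * (2 * q ^ k) := by ring
      _ ≤ A j + B j * A (j+1) - B j * (2 * q ^ k) := by linarith
      _ ≤ D j := h4
  have hlim : Filter.Tendsto (fun k : ℕ => A 0 - 2 * q ^ k) Filter.atTop (nhds (A 0)) := by
    have := (tendsto_pow_atTop_nhds_zero_of_lt_one hq0 hq1).const_mul 2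
    simpa using Filter.Tendsto.const_sub (A 0) this
  exact le_of_tendsto hlim (Filter.Eventually.of_forall fun k => main k 0)

private lemma alg9 (s t s4 t4 p0 p1 p2 q0 q1 q2 : ℝ)
    (hp1 : p1 ≠ 0) (hp2 : p2 ≠ 0) (hq1 : q1 ≠ 0) (hq2 : q2 ≠ 0)
    (hp0 : p0 = (1+s+s^2)*p1 - s4*p2) (hq0 : q0 = (1+t+t^2)*q1 - t4*q2) :
    q0/q1 - p0/p1
      = ((t-s)*(1+s+t) - (t4-s4)/(q1/q2)) + (s4/((p1/p2)*(q1/q2))) * (q1/q2 - p1/p2) := by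
  subst hp0 hq0
  field_simp
  ring

private lemma poly9 (a b : ℝ) (ha : 0 ≤ a) (hab : a < b) (hb : b < 1) :
    b^4 - a^4 < (b-a)*(1+a+b)*(1+b^4) := by
  have hb0 : 0 ≤ b := ha.trans hab.le
  have h1 : b^3 + a*b^2 + a^2*b + a^3 ≤ 4*b^3 := by
    nlinarith [mul_nonneg ha hb0, sq_nonneg (a-b), mul_nonneg (mul_nonneg ha ha) ha]
  have h2 : 4*b^3 < (1+b)*(1+b^4) := by
    nlinarith [mul_pos (sub_pos.2 hb) (show (0:ℝ) < 1+2*b+2*b^2-2*b^3-b^4 by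
      nlinarith [pow_le_one₀ hb0 hb.le (n:=4), mul_nonneg (mul_nonneg hb0 hb0) hb0])]
  have h3 : (1+b)*(1+b^4) ≤ (1+a+b)*(1+b^4) := by nlinarith [pow_nonneg hb0 4]
  have h4 : b^3 + a*b^2 + a^2*b + a^3 < (1+a+b)*(1+b^4) := by linarith
  nlinarith [mul_lt_mul_of_pos_left h4 (sub_pos.2 hab)]

/-- The function `μ(z) = F(z)/F(z⁴)` is strictly monotone increasing on `[0,1)`. -/
theorem stmt_9 (c : ℕ → ℝ) (F : ℝ → ℝ)
    (hc : ∀ n, c n = 0 ∨ c n = 1) (h0 : c 0 = 1)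
    (hF : ∀ z : ℝ, |z| < 1 → HasSum (fun n => c n * z ^ n) (F z))
    (heq : ∀ z : ℝ, 0 ≤ z → z < 1 →
      F z = (1 + z + z ^ 2) * F (z ^ 4) - z ^ 4 * F (z ^ 16)) :
    StrictMonoOn (fun z => F z / F (z ^ 4)) (Set.Ico (0 : ℝ) 1) := by
  -- Basic bounds on F
  have hge : ∀ z : ℝ, 0 ≤ z → z < 1 → 1 ≤ F z := by
    intro z hz0 hz1
    have habs : |z| < 1 := by rw [abs_of_nonneg hz0]; exact hz1
    have := le_hasSum (hF z habs) 0 (fun i _ => by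
      rcases hc i with h | h
      · simp [h]
      · simp [h]; positivity)
    simpa [h0] using this
  have hle : ∀ z : ℝ, 0 ≤ z → z < 1 → F z ≤ (1 - z)⁻¹ := by
    intro z hz0 hz1
    have habs : |z| < 1 := by rw [abs_of_nonneg hz0]; exact hz1
    refine hasSum_le (fun i => ?_) (hF z habs) (hasSum_geometric_of_lt_one hz0 hz1)
    rcases hc i with h | h
    · simp [h]; positivity
    · simp [h]
  -- key lower bound : (1+z) F(z^4) ≤ F z
  have hkey : ∀ z : ℝ, 0 ≤ z → z < 1 → (1 + z) * F (z ^ 4) ≤ F z := by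
    have main : ∀ k : ℕ, ∀ z : ℝ, 0 ≤ z → z < 1 → z ^ 4 ^ k ≤ 1/2 →
        (1 + z) * F (z ^ 4) ≤ F z := by
      intro k
      induction k with
      | zero =>
        intro z hz0 hz1 hhalf
        simp only [pow_zero, pow_one] at hhalf
        have h4 : (0:ℝ) ≤ z ^ 4 := by positivity
        have h41 : z ^ 4 < 1 := pow_lt_one₀ hz0 hz1 (by norm_num)
        have h16 : (0:ℝ) ≤ z ^ 16 := by positivity
        have h161 : z ^ 16 < 1 := pow_lt_one₀ hz0 hz1 (by norm_num)
        have hF4 : 1 ≤ F (z ^ 4) := hge _ h4 h41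
        have hF16 : F (z ^ 16) ≤ (1 - z ^ 16)⁻¹ := hle _ h16 h161
        have h16half : z ^ 16 ≤ 1/2 := by
          calc z ^ 16 ≤ z := by
                calc z ^ 16 ≤ z ^ 1 := pow_le_pow_of_le_one hz0 hz1.le (by norm_num)
                _ = z := pow_one z
          _ ≤ 1/2 := hhalf
        have hinv : (1 - z ^ 16)⁻¹ ≤ 2 := by
          rw [inv_le_comm₀ (by linarith) (by norm_num)]
          linarith
        have hF16' : F (z ^ 16) ≤ 2 := hF16.trans hinv
        have hF16'' : 1 ≤ F (z ^ 16) := hge _ h16 h161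
        rw [heq z hz0 hz1]
        have hz2 : z ^ 2 ≤ 1/4 := by nlinarith
        nlinarith [pow_nonneg hz0 2, pow_nonneg hz0 4]
      | succ k ih =>
        intro z hz0 hz1 hhalf
        have h4 : (0:ℝ) ≤ z ^ 4 := by positivity
        have h41 : z ^ 4 < 1 := pow_lt_one₀ hz0 hz1 (by norm_num)
        have h16 : (0:ℝ) ≤ z ^ 16 := by positivity
        have h161 : z ^ 16 < 1 := pow_lt_one₀ hz0 hz1 (by norm_num)
        have hpow : (z ^ 4) ^ 4 ^ k = z ^ 4 ^ (k+1) := by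
          rw [← pow_mul, pow_succ']
        have ih' := ih (z ^ 4) h4 h41 (by rw [hpow]; exact hhalf)
        have h164 : (z ^ 4) ^ 4 = z ^ 16 := by ring
        rw [h164] at ih'
        have hF16 : 1 ≤ F (z ^ 16) := hge _ h16 h161
        rw [heq z hz0 hz1]
        have hF4pos : 0 < F (z ^ 4) := lt_of_lt_of_le one_pos (hge _ h4 h41)
        have step : z ^ 4 * F (z ^ 16) ≤ z ^ 2 * F (z ^ 4) := by
          have fact : (0:ℝ) ≤ z ^ 2 + z ^ 6 - z ^ 4 := by
            nlinarith [sq_nonneg (z ^ 2 - 1/2), sq_nonneg z, sq_nonneg (z * (2 * z ^ 2 - 1))]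
          have h1 : z ^ 4 * F (z ^ 16) ≤ z ^ 2 * ((1 + z ^ 4) * F (z ^ 16)) := by
            nlinarith [mul_nonneg fact (le_trans zero_le_one hF16)]
          have h2 : z ^ 2 * ((1 + z ^ 4) * F (z ^ 16)) ≤ z ^ 2 * F (z ^ 4) :=
            mul_le_mul_of_nonneg_left ih' (by positivity)
          linarith
        linarith
    intro z hz0 hz1
    rcases le_or_gt z (1/2) with h | h
    · exact main 0 z hz0 hz1 (by simpa using h)
    · obtain ⟨n, hn⟩ := exists_pow_lt_of_lt_one (show (0:ℝ) < 1/2 by norm_num) hz1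
      refine main n z hz0 hz1 ?_
      calc z ^ 4 ^ n ≤ z ^ n := pow_le_pow_of_le_one hz0 hz1.le
            (le_trans (Nat.lt_two_pow_self (n := n)).le (Nat.pow_le_pow_left (by norm_num) n))
      _ ≤ 1/2 := hn.le
  -- main argument
  intro x hx y hy hxy
  obtain ⟨hx0, hx1⟩ := hx
  obtain ⟨hy0, hy1⟩ := hy
  simp only
  -- exponent bookkeeping
  have hupow : ∀ (z : ℝ) (j : ℕ), (z ^ 4 ^ j) ^ 4 = z ^ 4 ^ (j+1) := by
    intro z j; rw [← pow_mul, pow_succ]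
  have hupow16 : ∀ (z : ℝ) (j : ℕ), (z ^ 4 ^ j) ^ 16 = z ^ 4 ^ (j+2) := by
    intro z j; rw [← pow_mul, pow_add]; norm_num
  -- point facts
  have hx0' : ∀ j : ℕ, (0:ℝ) ≤ x ^ 4 ^ j := fun j => pow_nonneg hx0 _
  have hy0' : ∀ j : ℕ, (0:ℝ) ≤ y ^ 4 ^ j := fun j => pow_nonneg hy0 _
  have hx1' : ∀ j : ℕ, x ^ 4 ^ j < 1 := fun j =>
    pow_lt_one₀ hx0 hx1 (by positivity)
  have hy1' : ∀ j : ℕ, y ^ 4 ^ j < 1 := fun j =>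
    pow_lt_one₀ hy0 hy1 (by positivity)
  have hxy' : ∀ j : ℕ, x ^ 4 ^ j < y ^ 4 ^ j := fun j =>
    pow_lt_pow_left₀ hxy hx0 (by positivity)
  have hFpos : ∀ j : ℕ, (0:ℝ) < F (x ^ 4 ^ j) := fun j =>
    lt_of_lt_of_le one_pos (hge _ (hx0' j) (hx1' j))
  have hGpos : ∀ j : ℕ, (0:ℝ) < F (y ^ 4 ^ j) := fun j =>
    lt_of_lt_of_le one_pos (hge _ (hy0' j) (hy1' j))
  -- μ bounds
  have mlbx : ∀ j : ℕ, 1 + x ^ 4 ^ j ≤ F (x ^ 4 ^ j) / F (x ^ 4 ^ (j+1)) := by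
    intro j
    rw [le_div_iff₀ (hFpos (j+1))]
    have := hkey (x ^ 4 ^ j) (hx0' j) (hx1' j)
    rwa [hupow x j] at this
  have mlby : ∀ j : ℕ, 1 + y ^ 4 ^ j ≤ F (y ^ 4 ^ j) / F (y ^ 4 ^ (j+1)) := by
    intro j
    rw [le_div_iff₀ (hGpos (j+1))]
    have := hkey (y ^ 4 ^ j) (hy0' j) (hy1' j)
    rwa [hupow y j] at this
  have mubx : ∀ j : ℕ, F (x ^ 4 ^ j) / F (x ^ 4 ^ (j+1)) ≤ 1 + x ^ 4 ^ j + (x ^ 4 ^ j) ^ 2 := by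
    intro j
    rw [div_le_iff₀ (hFpos (j+1))]
    have h := heq (x ^ 4 ^ j) (hx0' j) (hx1' j)
    rw [hupow x j, hupow16 x j] at h
    have h16 : (0:ℝ) ≤ x ^ 4 ^ (j+1) * F (x ^ 4 ^ (j+2)) :=
      mul_nonneg (hx0' (j+1)) (hFpos (j+2)).le
    linarith
  have muby : ∀ j : ℕ, F (y ^ 4 ^ j) / F (y ^ 4 ^ (j+1)) ≤ 1 + y ^ 4 ^ j + (y ^ 4 ^ j) ^ 2 := by
    intro j
    rw [div_le_iff₀ (hGpos (j+1))]
    have h := heq (y ^ 4 ^ j) (hy0' j) (hy1' j)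
    rw [hupow y j, hupow16 y j] at h
    have h16 : (0:ℝ) ≤ y ^ 4 ^ (j+1) * F (y ^ 4 ^ (j+2)) :=
      mul_nonneg (hy0' (j+1)) (hGpos (j+2)).le
    linarith
  -- setup telescope
  set D : ℕ → ℝ := fun j =>
    F (y ^ 4 ^ j) / F (y ^ 4 ^ (j+1)) - F (x ^ 4 ^ j) / F (x ^ 4 ^ (j+1)) with hD
  set A : ℕ → ℝ := fun j =>
    (y ^ 4 ^ j - x ^ 4 ^ j) * (1 + x ^ 4 ^ j + y ^ 4 ^ j)
      - (y ^ 4 ^ (j+1) - x ^ 4 ^ (j+1)) / (F (y ^ 4 ^ (j+1)) / F (y ^ 4 ^ (j+2))) with hA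
  set B : ℕ → ℝ := fun j =>
    x ^ 4 ^ (j+1) /
      ((F (x ^ 4 ^ (j+1)) / F (x ^ 4 ^ (j+2))) * (F (y ^ 4 ^ (j+1)) / F (y ^ 4 ^ (j+2)))) with hB
  have hrec : ∀ j, D j = A j + B j * D (j+1) := by
    intro j
    have hpx := heq (x ^ 4 ^ j) (hx0' j) (hx1' j)
    rw [hupow x j, hupow16 x j] at hpx
    have hpy := heq (y ^ 4 ^ j) (hy0' j) (hy1' j)
    rw [hupow y j, hupow16 y j] at hpy
    simp only [hD, hA, hB]
    exact alg9 (x ^ 4 ^ j) (y ^ 4 ^ j) (x ^ 4 ^ (j+1)) (y ^ 4 ^ (j+1))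
      (F (x ^ 4 ^ j)) (F (x ^ 4 ^ (j+1))) (F (x ^ 4 ^ (j+2)))
      (F (y ^ 4 ^ j)) (F (y ^ 4 ^ (j+1))) (F (y ^ 4 ^ (j+2)))
      (hFpos (j+1)).ne' (hFpos (j+2)).ne' (hGpos (j+1)).ne' (hGpos (j+2)).ne' hpx hpy
  have hApos : ∀ j, 0 < A j := by
    intro j
    simp only [hA]
    have hab := hxy' j
    have ha0 := hx0' j
    have hb1 := hy1' j
    have hpoly := poly9 (x ^ 4 ^ j) (y ^ 4 ^ j) ha0 hab hb1
    have ht4pos : (0:ℝ) < 1 + (y ^ 4 ^ j) ^ 4 := by positivity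
    have hnum : (0:ℝ) ≤ (y ^ 4 ^ j) ^ 4 - (x ^ 4 ^ j) ^ 4 := by
      have := pow_le_pow_left₀ ha0 hab.le 4
      linarith
    have hmu : 1 + (y ^ 4 ^ j) ^ 4 ≤ F (y ^ 4 ^ (j+1)) / F (y ^ 4 ^ (j+2)) := by
      rw [hupow y j]
      exact mlby (j+1)
    have hdiv : ((y ^ 4 ^ j) ^ 4 - (x ^ 4 ^ j) ^ 4) / (F (y ^ 4 ^ (j+1)) / F (y ^ 4 ^ (j+2)))
        ≤ ((y ^ 4 ^ j) ^ 4 - (x ^ 4 ^ j) ^ 4) / (1 + (y ^ 4 ^ j) ^ 4) :=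
      div_le_div_of_nonneg_left hnum ht4pos hmu
    have hdiv2 : ((y ^ 4 ^ j) ^ 4 - (x ^ 4 ^ j) ^ 4) / (1 + (y ^ 4 ^ j) ^ 4)
        < (y ^ 4 ^ j - x ^ 4 ^ j) * (1 + x ^ 4 ^ j + y ^ 4 ^ j) := by
      rw [div_lt_iff₀ ht4pos]
      nlinarith [hpoly]
    rw [hupow x j, hupow y j] at hdiv hdiv2
    linarith
  have hB0 : ∀ j, 0 ≤ B j := by
    intro j
    simp only [hB]
    have h1 : (0:ℝ) < F (x ^ 4 ^ (j+1)) / F (x ^ 4 ^ (j+2)) :=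
      div_pos (hFpos (j+1)) (hFpos (j+2))
    have h2 : (0:ℝ) < F (y ^ 4 ^ (j+1)) / F (y ^ 4 ^ (j+2)) :=
      div_pos (hGpos (j+1)) (hGpos (j+2))
    positivity
  have hBq : ∀ j, B j ≤ x ^ 4 := by
    intro j
    simp only [hB]
    have h1 : (1:ℝ) ≤ F (x ^ 4 ^ (j+1)) / F (x ^ 4 ^ (j+2)) := by
      have := mlbx (j+1); nlinarith [hx0' (j+1)]
    have h2 : (1:ℝ) ≤ F (y ^ 4 ^ (j+1)) / F (y ^ 4 ^ (j+2)) := by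
      have := mlby (j+1); nlinarith [hy0' (j+1)]
    have hden : (1:ℝ) ≤ (F (x ^ 4 ^ (j+1)) / F (x ^ 4 ^ (j+2)))
        * (F (y ^ 4 ^ (j+1)) / F (y ^ 4 ^ (j+2))) := by nlinarith
    calc x ^ 4 ^ (j+1) /
        ((F (x ^ 4 ^ (j+1)) / F (x ^ 4 ^ (j+2))) * (F (y ^ 4 ^ (j+1)) / F (y ^ 4 ^ (j+2))))
        ≤ x ^ 4 ^ (j+1) := div_le_self (hx0' (j+1)) hden
    _ ≤ x ^ 4 := by
        have : (4:ℕ) ≤ 4 ^ (j+1) := by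
          calc (4:ℕ) = 4 ^ 1 := (pow_one 4).symm
          _ ≤ 4 ^ (j+1) := Nat.pow_le_pow_right (by norm_num) (by omega)
        exact pow_le_pow_of_le_one hx0 hx1.le this
  have hDlb : ∀ j, -2 ≤ D j := by
    intro j
    simp only [hD]
    have h1 := mlby j
    have h2 := mubx j
    have h3 := hx1' j
    have h4 := hy0' j
    nlinarith [hx0' j, sq_nonneg (x ^ 4 ^ j)]
  have hq0 : (0:ℝ) ≤ x ^ 4 := by positivity
  have hq1 : x ^ 4 < 1 := pow_lt_one₀ hx0 hx1 (by norm_num)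
  have hfinal : A 0 ≤ D 0 := telescope9 D A B (x ^ 4) hq0 hq1 hrec
    (fun j => (hApos j).le) hB0 hBq hDlb
  have hD0 : 0 < D 0 := lt_of_lt_of_le (hApos 0) hfinal
  simp only [hD, pow_zero, pow_one] at hD0
  linarith
end

section
/- Suppose polynomials p_0,...,p_M ∈ ℚ[z], not all zero with gcd(p_0,...,p_M)=1, and a rational function λ(z) satisfy λ(z)·Σ_{m=0}^M p_m(z) y^m = Σ_{m=0}^M p_m(z⁴)(1+z+z²-zy)^{M-m} identically in z and y. Then λ(z) = λ·z^N for some nonzero rational λ and integer N ≥ 0. -/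
open Polynomial

lemma gcd_mem_span {R : Type*} [CommRing R] [IsDomain R] [IsPrincipalIdealRing R]
    [NormalizedGCDMonoid R] {β : Type*} (s : Finset β) (f : β → R) :
    s.gcd f ∈ Ideal.span (f '' s) := by
  classical
  induction s using Finset.induction_on with
  | empty => simp
  | @insert a s ha ih =>
    rw [Finset.gcd_insert, Finset.coe_insert]
    have h1 : GCDMonoid.gcd (f a) (s.gcd f) ∈ Ideal.span {f a, s.gcd f} := by
      rw [← span_gcd]
      exact Ideal.subset_span rfl
    refine Ideal.span_le.mpr ?_ h1
    intro x hx
    simp only [Set.mem_insert_iff, Set.mem_singleton_iff] at hx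
    rcases hx with rfl | rfl
    · exact Ideal.subset_span ⟨a, Set.mem_insert a _, rfl⟩
    · exact Ideal.span_mono (Set.image_mono (f := f) (Set.subset_insert a ↑s)) ih

lemma key_vanish {K : Type*} [Field K] (M : ℕ) (c : Fin (M + 1) → K) (a b : K) (ha : a ≠ 0)
    (h : (∑ m : Fin (M + 1), C (c m) * (C b - C a * X) ^ (M - (m : ℕ))) = 0)
    (m₀ : Fin (M + 1)) : c m₀ = 0 := by
  set S : K[X] := C a⁻¹ * (C b - X) with hS
  have hTS : (C b - C a * X).comp S = X := by
    rw [sub_comp, C_comp, mul_comp, C_comp, X_comp, hS, ← mul_assoc, ← C_mul,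
      mul_inv_cancel₀ ha, C_1, one_mul]
    ring
  have h2 : (∑ m : Fin (M + 1), C (c m) * (X : K[X]) ^ (M - (m : ℕ))) = 0 := by
    have h3 := congrArg (fun q : K[X] => q.comp S) h
    simpa only [sum_comp, mul_comp, pow_comp, C_comp, hTS, zero_comp] using h3
  have h4 := congrArg (fun q : K[X] => q.coeff (M - (m₀ : ℕ))) h2
  simp only [finset_sum_coeff, coeff_C_mul, coeff_X_pow, coeff_zero] at h4
  rw [Finset.sum_eq_single m₀] at h4
  · simpa using h4
  · intro m _ hm
    have h5 : M - (m₀ : ℕ) ≠ M - (m : ℕ) := by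
      have hm' : (m : ℕ) ≠ (m₀ : ℕ) := fun h => hm (Fin.ext h)
      have := m.isLt
      have := m₀.isLt
      omega
    simp [h5]
  · simp

/-- If `p_0,…,p_M ∈ ℚ[z]`, not all zero, with `gcd(p_0,…,p_M) = 1`, and a rational
function `λ(z)` satisfy `λ(z)·Σ p_m(z) yᵐ = Σ p_m(z⁴)(1+z+z²-zy)^{M-m} identically,
then `λ(z) = λ·z^N` for some nonzero rational `λ` and some `N ≥ 0`. -/
theorem stmt_12 (M : ℕ) (p : Fin (M + 1) → Polynomial ℚ)
    (hne : ∃ m, p m ≠ 0)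
    (hgcd : Finset.univ.gcd p = 1)
    (lam : RatFunc ℚ)
    (hid : Polynomial.C lam *
        (∑ m : Fin (M + 1),
          Polynomial.C (algebraMap (Polynomial ℚ) (RatFunc ℚ) (p m)) *
            Polynomial.X ^ (m : ℕ))
      = ∑ m : Fin (M + 1),
          Polynomial.C (algebraMap (Polynomial ℚ) (RatFunc ℚ)
              ((p m).comp (Polynomial.X ^ 4))) *
            (Polynomial.C (algebraMap (Polynomial ℚ) (RatFunc ℚ)
                (1 + Polynomial.X + Polynomial.X ^ 2)) -
              Polynomial.C (algebraMap (Polynomial ℚ) (RatFunc ℚ) Polynomial.X) *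
                Polynomial.X) ^ (M - (m : ℕ))) :
    ∃ (l : ℚ) (N : ℕ), l ≠ 0 ∧ lam = RatFunc.C l * RatFunc.X ^ N := by
  classical
  set φ := algebraMap (Polynomial ℚ) (RatFunc ℚ) with hφ
  -- Bezout combination
  have h1 : (1 : Polynomial ℚ) ∈ Ideal.span (Set.range p) := by
    have h := gcd_mem_span Finset.univ p
    rwa [Finset.coe_univ, Set.image_univ, hgcd] at h
  obtain ⟨u, hu⟩ := (Submodule.mem_span_range_iff_exists_fun _).mp h1
  simp only [smul_eq_mul] at hu
  -- the two polynomials over ℚ[z]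
  set P₀ : Polynomial (Polynomial ℚ) := ∑ m : Fin (M + 1), C (p m) * X ^ (m : ℕ) with hP₀
  set Q₀ : Polynomial (Polynomial ℚ) := ∑ m : Fin (M + 1),
      C ((p m).comp (X ^ 4)) * (C (1 + X + X ^ 2) - C X * X) ^ (M - (m : ℕ)) with hQ₀
  have hid' : C lam * P₀.map φ = Q₀.map φ := by
    rw [hP₀, hQ₀]
    simpa only [Polynomial.map_sum, Polynomial.map_mul, Polynomial.map_pow,
      Polynomial.map_C, Polynomial.map_X, Polynomial.map_sub] using hid
  have hPc : ∀ m : Fin (M + 1), P₀.coeff (m : ℕ) = p m := by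
    intro m
    rw [hP₀, finset_sum_coeff, Finset.sum_eq_single m]
    · simp [coeff_C_mul, coeff_X_pow]
    · intro i _ hi
      have : (m : ℕ) ≠ (i : ℕ) := fun h => hi (Fin.ext h.symm)
      simp [coeff_C_mul, coeff_X_pow, this]
    · simp
  have hc : ∀ m : Fin (M + 1), lam * φ (p m) = φ (Q₀.coeff (m : ℕ)) := by
    intro m
    have h2 := congrArg (fun q : Polynomial (RatFunc ℚ) => q.coeff (m : ℕ)) hid'
    simpa [coeff_C_mul, coeff_map, hPc m] using h2
  set g : Polynomial ℚ := ∑ m : Fin (M + 1), u m * Q₀.coeff (m : ℕ) with hg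
  have hlam : lam = φ g := by
    have : lam = lam * φ (∑ m : Fin (M + 1), u m * p m) := by rw [hu]; simp
    rw [this, hg, map_sum, map_sum, Finset.mul_sum]
    refine Finset.sum_congr rfl fun m _ => ?_
    rw [map_mul, map_mul, ← mul_assoc, mul_comm lam (φ (u m)), mul_assoc, hc m]
  have hinj : Function.Injective φ := RatFunc.algebraMap_injective ℚ
  have hID : C g * P₀ = Q₀ := by
    apply Polynomial.map_injective φ hinj
    rw [Polynomial.map_mul, Polynomial.map_C, ← hlam, hid']
  -- evaluation argument over the algebraic closure
  have hroot : ∀ a : AlgebraicClosure ℚ, a ≠ 0 → (Polynomial.aeval a) g ≠ 0 := by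
    intro a ha hga
    set e : Polynomial ℚ →+* AlgebraicClosure ℚ :=
      (Polynomial.aeval a : Polynomial ℚ →ₐ[ℚ] AlgebraicClosure ℚ).toRingHom with he
    have hmap := congrArg (Polynomial.map e) hID
    have heg : e g = 0 := hga
    have heX : e X = a := by simp [he]
    rw [Polynomial.map_mul, Polynomial.map_C, heg, C_0, zero_mul, hQ₀] at hmap
    simp only [Polynomial.map_sum, Polynomial.map_mul, Polynomial.map_pow,
      Polynomial.map_C, Polynomial.map_X, Polynomial.map_sub] at hmap
    have hvan : ∀ m : Fin (M + 1), (Polynomial.aeval (a ^ 4)) (p m) = 0 := by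
      have hcomp : ∀ m : Fin (M + 1), e ((p m).comp (X ^ 4)) =
          (Polynomial.aeval (a ^ 4)) (p m) := by
        intro m
        simp [he, aeval_comp]
      have hb : e (1 + X + X ^ 2) = 1 + a + a ^ 2 := by simp [he]
      apply key_vanish M _ a (1 + a + a ^ 2) ha
      rw [← hmap.symm]
      refine (Finset.sum_congr rfl fun m _ => ?_).symm
      rw [hcomp m, hb, heX]
    have h7 := congrArg (Polynomial.aeval (a ^ 4) : Polynomial ℚ →ₐ[ℚ] AlgebraicClosure ℚ) hu
    simp only [map_sum, map_mul, map_one, hvan, mul_zero, Finset.sum_const_zero] at h7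
    exact zero_ne_one h7
  have hg0 : g ≠ 0 := by
    intro h0
    exact hroot 1 one_ne_zero (by simp [h0])
  -- g is a monomial
  set ι : ℚ →+* AlgebraicClosure ℚ := algebraMap ℚ (AlgebraicClosure ℚ) with hι
  have hsplit : Splits (g.map ι) := IsAlgClosed.splits _
  have hGroots : ∀ x ∈ (g.map ι).roots, x = 0 := by
    intro x hx
    by_contra hx0
    apply hroot x hx0
    have := isRoot_of_mem_roots hx
    rwa [IsRoot, eval_map, ← aeval_def] at this
  have hGfact : g.map ι = C (ι g.leadingCoeff) * ((g.map ι).roots.map (fun a => X - C a)).prod := by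
    rw [← leadingCoeff_map]; exact hsplit.eq_prod_roots
  set N := Multiset.card (g.map ι).roots with hN
  have hmap0 : Multiset.map (fun a => X - C a) (g.map ι).roots
      = Multiset.map (fun _ => (X : Polynomial (AlgebraicClosure ℚ))) (g.map ι).roots := by
    apply Multiset.map_congr rfl
    intro x hx
    rw [hGroots x hx, C_0, sub_zero]
  have hGmon : g.map ι = C (ι g.leadingCoeff) * X ^ N := by
    rw [hGfact, hmap0, Multiset.map_const', Multiset.prod_replicate]
  have hgmon : g = C g.leadingCoeff * X ^ N := by
    apply Polynomial.map_injective ι ι.injective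
    rw [hGmon, Polynomial.map_mul, Polynomial.map_C, Polynomial.map_pow, Polynomial.map_X]
  refine ⟨g.leadingCoeff, N, leadingCoeff_ne_zero.mpr hg0, ?_⟩
  rw [hlam, hgmon, map_mul, map_pow, hφ, RatFunc.algebraMap_C, RatFunc.algebraMap_X]
  rw [leadingCoeff_C_mul_X_pow]
end
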